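/- Let n ≥ 2, let A′ be a fixed (n−1)×(n−1) complex Hermitian matrix, and let b ∈ ℂ^{n−1} be a fixed vector. For each t ∈ ℝ, let A(t) be the n×n Hermitian matrix whose top-left (n−1)×(n−1) block is A′, whose last column above the diagonal is b, whose last row left of the diagonal is the conjugate transpose of b, and whose (n,n) entry is t. Let λ_1(A(t)) ≤ ⋯ ≤ λ_n(A(t)) and λ_1′(A′) ≤ ⋯ ≤ λ_{n−1}′(A′) denote eigenvalues in increasing order. Then as t → +∞: (i) λ_j(A(t)) → λ_j′(A′) for each 1 ≤ j ≤ n−1; (ii) t ≤ λ_n(A(t)) for every t; and (iii) λ_n(A(t))/t → 1. -/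

import Mathlib

/-- The eigenvalues of a Hermitian matrix, sorted in increasing order. -/
noncomputable def sortedEigs {n : ℕ} {A : Matrix (Fin n) (Fin n) ℂ}
    (hA : A.IsHermitian) : Fin n → ℝ :=
  hA.eigenvalues ∘ Tuple.sort hA.eigenvalues

/-- The `(m+2) × (m+2)` Hermitian matrix whose top-left `(m+1) × (m+1)` block is `A'`,
whose last column above the diagonal is `b`, whose last row left of the diagonal is the
conjugate transpose of `b`, and whose bottom-right entry is `t`. -/
noncomputable def borderedMatrix (m : ℕ) (A' : Matrix (Fin (m+1)) (Fin (m+1)) ℂ)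
    (b : Fin (m+1) → ℂ) (t : ℝ) : Matrix (Fin (m+2)) (Fin (m+2)) ℂ :=
  fun i j =>
    Fin.lastCases
      (Fin.lastCases ((t : ℂ)) (fun j' => star (b j')) j)
      (fun i' => Fin.lastCases (b i') (fun j' => A' i' j') j)
      i

open Matrix Finset

namespace BEA

section general
variable {n : ℕ} {A : Matrix (Fin n) (Fin n) ℂ}


variable {n : ℕ} {A : Matrix (Fin n) (Fin n) ℂ}

/-- quadratic form representation -/
lemma quad_repr (hA : A.IsHermitian) (x : Fin n → ℂ) :
    star x ⬝ᵥ A *ᵥ x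
      = ∑ i, (hA.eigenvalues i : ℂ) *
          Complex.normSq ((star (hA.eigenvectorUnitary : Matrix (Fin n) (Fin n) ℂ) *ᵥ x) i) ∧
    star x ⬝ᵥ x
      = ∑ i, (Complex.normSq ((star (hA.eigenvectorUnitary : Matrix (Fin n) (Fin n) ℂ) *ᵥ x) i) : ℂ) := by
  set U : Matrix (Fin n) (Fin n) ℂ := (hA.eigenvectorUnitary : Matrix (Fin n) (Fin n) ℂ) with hU
  have hUU : U * star U = 1 := (Matrix.mem_unitaryGroup_iff).1 hA.eigenvectorUnitary.2
  set y : Fin n → ℂ := star U *ᵥ x with hy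
  have hstary : star x ᵥ* U = star y := by
    rw [hy, Matrix.star_mulVec, ← Matrix.star_eq_conjTranspose, star_star]
  constructor
  · conv_lhs => rw [hA.spectral_theorem, Unitary.conjStarAlgAut_apply]
    rw [← hU, ← Matrix.mulVec_mulVec, ← Matrix.mulVec_mulVec, Matrix.dotProduct_mulVec, hstary]
    rw [← hy]
    simp only [Matrix.mulVec_diagonal, dotProduct, Function.comp_apply]
    refine Finset.sum_congr rfl fun i _ => ?_
    have : (starRingEnd ℂ) (y i) * y i = (Complex.normSq (y i) : ℂ) := by
      rw [mul_comm, Complex.mul_conj]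
    calc star (y i) * ((hA.eigenvalues i : ℂ) * y i)
        = (hA.eigenvalues i : ℂ) * (star (y i) * y i) := by ring
      _ = _ := by rw [show star (y i) = (starRingEnd ℂ) (y i) from rfl, this]
  · have : star x ⬝ᵥ x = star y ⬝ᵥ y := by
      rw [hy, Matrix.star_mulVec, ← Matrix.star_eq_conjTranspose, star_star, ← Matrix.dotProduct_mulVec, Matrix.mulVec_mulVec,
        hUU, Matrix.one_mulVec]
    rw [this, dotProduct]
    refine Finset.sum_congr rfl fun i _ => ?_
    simp only [Pi.star_apply]
    rw [show star (y i) = (starRingEnd ℂ) (y i) from rfl, mul_comm, Complex.mul_conj]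


variable {n : ℕ} {A : Matrix (Fin n) (Fin n) ℂ}

lemma exists_coord_subspace (hA : A.IsHermitian) (S : Finset (Fin n)) :
    ∃ V : Submodule ℂ (Fin n → ℂ), Module.finrank ℂ V = S.card ∧
      ∀ x ∈ V, ∃ w : Fin n → ℝ,
        (∀ i, 0 ≤ w i) ∧ (∀ i ∉ S, w i = 0) ∧
        (star x ⬝ᵥ A *ᵥ x) = ∑ i, (hA.eigenvalues i : ℂ) * w i ∧
        (star x ⬝ᵥ x) = ∑ i, (w i : ℂ) := by
  classical
  set U : Matrix (Fin n) (Fin n) ℂ := (hA.eigenvectorUnitary : Matrix (Fin n) (Fin n) ℂ) with hU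
  have hUU : U * star U = 1 := (Matrix.mem_unitaryGroup_iff).1 hA.eigenvectorUnitary.2
  have hUU' : star U * U = 1 := (Matrix.mem_unitaryGroup_iff').1 hA.eigenvectorUnitary.2
  -- the linear equivalence given by multiplication by U
  let e : (Fin n → ℂ) ≃ₗ[ℂ] (Fin n → ℂ) :=
    LinearEquiv.ofLinear (Matrix.mulVecLin U) (Matrix.mulVecLin (star U))
      (by rw [← Matrix.mulVecLin_mul, hUU, Matrix.mulVecLin_one])
      (by rw [← Matrix.mulVecLin_mul, hUU', Matrix.mulVecLin_one])
  set W₀ : Submodule ℂ (Fin n → ℂ) :=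
    Submodule.span ℂ ((fun i => Pi.single i (1:ℂ)) '' ↑S) with hW₀
  have hsingle_inj : Function.Injective (fun i : Fin n => Pi.single i (1:ℂ)) := by
    intro i j hij
    by_contra hne
    have := congrFun hij i
    simp [Pi.single_apply, hne] at this
  have hrank0 : Module.finrank ℂ W₀ = S.card := by
    rw [hW₀, finrank_span_set_eq_card, Set.toFinset_image]
    · simp [Finset.card_image_of_injective _ hsingle_inj]
    · apply (Pi.basisFun ℂ (Fin n)).linearIndependent.linearIndepOn_id.mono
      intro x hx
      rcases hx with ⟨i, _, rfl⟩
      exact ⟨i, by simp⟩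
  have hsupp : ∀ y ∈ W₀, ∀ i ∉ S, y i = 0 := by
    intro y hy
    induction hy using Submodule.span_induction with
    | mem z hz =>
      rcases hz with ⟨j, hj, rfl⟩
      intro i hi
      have : i ≠ j := fun h => hi (h ▸ hj)
      simp [Pi.single_apply, this]
    | zero => simp
    | add y z _ _ hy hz => intro i hi; simp [hy i hi, hz i hi]
    | smul c y _ hy => intro i hi; simp [hy i hi]
  refine ⟨W₀.map (e : (Fin n → ℂ) →ₗ[ℂ] (Fin n → ℂ)), ?_, ?_⟩
  · rw [LinearEquiv.finrank_map_eq]; exact hrank0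
  · rintro x ⟨y₀, hy₀, rfl⟩
    have hx : (e : (Fin n → ℂ) →ₗ[ℂ] (Fin n → ℂ)) y₀ = U *ᵥ y₀ := rfl
    have hrec : star U *ᵥ (U *ᵥ y₀) = y₀ := by
      rw [Matrix.mulVec_mulVec, hUU', Matrix.one_mulVec]
    refine ⟨fun i => Complex.normSq (y₀ i), fun i => Complex.normSq_nonneg _, ?_, ?_, ?_⟩
    · intro i hi; simp only [hsupp y₀ hy₀ i hi, map_zero]
    · rw [hx, (quad_repr hA (U *ᵥ y₀)).1, hrec]
    · rw [hx, (quad_repr hA (U *ᵥ y₀)).2, hrec]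

lemma sortedEigs_mono (hA : A.IsHermitian) : Monotone (sortedEigs hA) :=
  Tuple.monotone_sort _

lemma normsq_re (x : Fin n → ℂ) :
    (star x ⬝ᵥ x).re = ∑ i, Complex.normSq (x i) := by
  rw [dotProduct, Complex.re_sum]
  refine Finset.sum_congr rfl fun i _ => ?_
  simp only [Pi.star_apply]
  rw [show star (x i) = (starRingEnd ℂ) (x i) from rfl, mul_comm, Complex.mul_conj]
  simp

lemma normsq_pos {x : Fin n → ℂ} (hx : x ≠ 0) : 0 < (star x ⬝ᵥ x).re := by
  rw [normsq_re]
  obtain ⟨i, hi⟩ : ∃ i, x i ≠ 0 := by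
    by_contra h
    push_neg at h
    exact hx (funext h)
  refine Finset.sum_pos' (fun j _ => Complex.normSq_nonneg _) ⟨i, Finset.mem_univ i, ?_⟩
  exact Complex.normSq_pos.2 hi

lemma sorted_le_of_subspace (hA : A.IsHermitian) (k : Fin n) (c : ℝ)
    (W : Submodule ℂ (Fin n → ℂ)) (hdim : (k : ℕ) + 1 ≤ Module.finrank ℂ W)
    (hW : ∀ x ∈ W, (star x ⬝ᵥ A *ᵥ x).re ≤ c * (star x ⬝ᵥ x).re) :
    sortedEigs hA k ≤ c := by
  classical
  set σ := Tuple.sort hA.eigenvalues with hσ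
  set S : Finset (Fin n) := Finset.image σ (Finset.Ici k) with hS
  have hScard : S.card = n - k := by
    rw [hS, Finset.card_image_of_injective _ σ.injective, Fin.card_Ici]
  obtain ⟨V, hVrank, hrep⟩ := exists_coord_subspace hA S
  -- W ⊓ V is nontrivial
  have hne : W ⊓ V ≠ ⊥ := by
    intro hbot
    have h1 := Submodule.finrank_sup_add_finrank_inf_eq W V
    rw [hbot, finrank_bot] at h1
    have h2 : Module.finrank ℂ ↥(W ⊔ V) ≤ n := by
      refine le_trans (Submodule.finrank_le _) ?_
      rw [Module.finrank_fintype_fun_eq_card, Fintype.card_fin]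
    have hk : (k : ℕ) < n := k.isLt
    rw [hVrank, hScard] at h1
    omega
  obtain ⟨x, hx, hx0⟩ := Submodule.exists_mem_ne_zero_of_ne_bot hne
  have hxW : x ∈ W := hx.1
  have hxV : x ∈ V := hx.2
  obtain ⟨w, hw0, hwS, hq, hn⟩ := hrep x hxV
  have hqre : (star x ⬝ᵥ A *ᵥ x).re = ∑ i, hA.eigenvalues i * w i := by
    rw [hq, Complex.re_sum]
    refine Finset.sum_congr rfl fun i _ => ?_
    simp
  have hnre : (star x ⬝ᵥ x).re = ∑ i, w i := by
    rw [hn, Complex.re_sum]; simp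
  have hNpos : 0 < (star x ⬝ᵥ x).re := normsq_pos hx0
  have hlow : sortedEigs hA k * (star x ⬝ᵥ x).re ≤ (star x ⬝ᵥ A *ᵥ x).re := by
    rw [hqre, hnre, Finset.mul_sum]
    refine Finset.sum_le_sum fun i _ => ?_
    by_cases hiS : i ∈ S
    · obtain ⟨j, hj, rfl⟩ := Finset.mem_image.1 hiS
      have hjk : k ≤ j := Finset.mem_Ici.1 hj
      have : sortedEigs hA k ≤ sortedEigs hA j := sortedEigs_mono hA hjk
      have hev : hA.eigenvalues (σ j) = sortedEigs hA j := rfl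
      rw [hev]
      exact mul_le_mul_of_nonneg_right this (hw0 _)
    · rw [hwS i hiS, mul_zero, mul_zero]
  have := le_trans hlow (hW x hxW)
  exact le_of_mul_le_mul_right (by linarith) hNpos



lemma conj_trace_aux (hA : A.IsHermitian) (D : Matrix (Fin n) (Fin n) ℂ) :
    ((hA.eigenvectorUnitary : Matrix (Fin n) (Fin n) ℂ) * D *
      star (hA.eigenvectorUnitary : Matrix (Fin n) (Fin n) ℂ)).trace = D.trace := by
  have hUU' : star (hA.eigenvectorUnitary : Matrix (Fin n) (Fin n) ℂ) *
      (hA.eigenvectorUnitary : Matrix (Fin n) (Fin n) ℂ) = 1 :=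
    (Matrix.mem_unitaryGroup_iff').1 hA.eigenvectorUnitary.2
  rw [Matrix.trace_mul_cycle, hUU', one_mul]

lemma trace_eq_sum_eigs (hA : A.IsHermitian) :
    A.trace = ∑ i, (hA.eigenvalues i : ℂ) := by
  conv_lhs => rw [hA.spectral_theorem, Unitary.conjStarAlgAut_apply]
  rw [conj_trace_aux hA, Matrix.trace_diagonal]
  simp [Function.comp]

lemma trace_sq_eq_sum_eigs_sq (hA : A.IsHermitian) :
    (A * A).trace = ∑ i, ((hA.eigenvalues i : ℂ)) ^ 2 := by
  set U : Matrix (Fin n) (Fin n) ℂ := (hA.eigenvectorUnitary : Matrix (Fin n) (Fin n) ℂ) with hU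
  have hUU' : star U * U = 1 := (Matrix.mem_unitaryGroup_iff').1 hA.eigenvectorUnitary.2
  set D : Matrix (Fin n) (Fin n) ℂ := Matrix.diagonal (RCLike.ofReal ∘ hA.eigenvalues) with hD
  have h1 : A * A = U * (D * D) * star U := by
    conv_lhs => rw [hA.spectral_theorem, Unitary.conjStarAlgAut_apply]
    rw [← hU, ← hD]
    have : U * D * star U * U = U * D := by rw [mul_assoc, hUU', mul_one]
    rw [show U * D * star U * (U * D * star U) = U * D * star U * U * (D * star U) by
      simp only [mul_assoc], this]
    simp only [mul_assoc]
  rw [h1, conj_trace_aux hA, hD, Matrix.diagonal_mul_diagonal, Matrix.trace_diagonal]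
  simp [sq]

lemma sum_sorted (hA : A.IsHermitian) : ∑ i, sortedEigs hA i = A.trace.re := by
  rw [trace_eq_sum_eigs hA, Complex.re_sum]
  simp only [Complex.ofReal_re]
  exact Equiv.sum_comp (Tuple.sort hA.eigenvalues) hA.eigenvalues

lemma sum_sorted_sq (hA : A.IsHermitian) :
    ∑ i, (sortedEigs hA i) ^ 2 = (A * A).trace.re := by
  rw [trace_sq_eq_sum_eigs_sq hA, Complex.re_sum]
  have : ∀ i, (((hA.eigenvalues i : ℂ)) ^ 2).re = (hA.eigenvalues i) ^ 2 := by
    intro i; rw [← Complex.ofReal_pow, Complex.ofReal_re]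
  simp only [this]
  exact Equiv.sum_comp (Tuple.sort hA.eigenvalues) (fun i => hA.eigenvalues i ^ 2)

lemma rayleigh_le_max {A : Matrix (Fin (n+1)) (Fin (n+1)) ℂ} (hA : A.IsHermitian)
    (x : Fin (n+1) → ℂ) :
    (star x ⬝ᵥ A *ᵥ x).re ≤ sortedEigs hA (Fin.last n) * (star x ⬝ᵥ x).re := by
  classical
  obtain ⟨V, hVrank, hrep⟩ := exists_coord_subspace hA Finset.univ
  have hVtop : V = ⊤ := by
    apply Submodule.eq_top_of_finrank_eq
    rw [hVrank, Module.finrank_fintype_fun_eq_card]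
    simp
  obtain ⟨w, hw0, _, hq, hn⟩ := hrep x (hVtop ▸ Submodule.mem_top)
  have hqre : (star x ⬝ᵥ A *ᵥ x).re = ∑ i, hA.eigenvalues i * w i := by
    rw [hq, Complex.re_sum]; simp
  have hnre : (star x ⬝ᵥ x).re = ∑ i, w i := by
    rw [hn, Complex.re_sum]; simp
  rw [hqre, hnre, Finset.mul_sum]
  refine Finset.sum_le_sum fun i _ => ?_
  have hev : hA.eigenvalues i = sortedEigs hA ((Tuple.sort hA.eigenvalues).symm i) := by
    simp [sortedEigs]
  have : hA.eigenvalues i ≤ sortedEigs hA (Fin.last n) := by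
    rw [hev]; exact sortedEigs_mono hA (Fin.le_last _)
  exact mul_le_mul_of_nonneg_right this (hw0 _)

lemma exists_low_subspace (hA : A.IsHermitian) (k : Fin n) :
    ∃ V : Submodule ℂ (Fin n → ℂ), Module.finrank ℂ V = (k : ℕ) + 1 ∧
      ∀ x ∈ V, (star x ⬝ᵥ A *ᵥ x).re ≤ sortedEigs hA k * (star x ⬝ᵥ x).re := by
  classical
  set σ := Tuple.sort hA.eigenvalues with hσ
  set S : Finset (Fin n) := Finset.image σ (Finset.Iic k) with hS
  have hScard : S.card = (k : ℕ) + 1 := by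
    rw [hS, Finset.card_image_of_injective _ σ.injective, Fin.card_Iic]
  obtain ⟨V, hVrank, hrep⟩ := exists_coord_subspace hA S
  refine ⟨V, by rw [hVrank, hScard], fun x hx => ?_⟩
  obtain ⟨w, hw0, hwS, hq, hn⟩ := hrep x hx
  have hqre : (star x ⬝ᵥ A *ᵥ x).re = ∑ i, hA.eigenvalues i * w i := by
    rw [hq, Complex.re_sum]; simp
  have hnre : (star x ⬝ᵥ x).re = ∑ i, w i := by
    rw [hn, Complex.re_sum]; simp
  rw [hqre, hnre, Finset.mul_sum]
  refine Finset.sum_le_sum fun i _ => ?_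
  by_cases hiS : i ∈ S
  · obtain ⟨j, hj, rfl⟩ := Finset.mem_image.1 hiS
    have hjk : j ≤ k := Finset.mem_Iic.1 hj
    have hev : hA.eigenvalues (σ j) = sortedEigs hA j := rfl
    rw [hev]
    exact mul_le_mul_of_nonneg_right (sortedEigs_mono hA hjk) (hw0 _)
  · rw [hwS i hiS, mul_zero, mul_zero]


end general

section bordered
variable {m : ℕ} {A' : Matrix (Fin (m+1)) (Fin (m+1)) ℂ} {b : Fin (m+1) → ℂ} {t : ℝ}

@[simp] lemma bM_cc (i j : Fin (m+1)) :
    borderedMatrix m A' b t i.castSucc j.castSucc = A' i j := by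
  simp [borderedMatrix]

@[simp] lemma bM_cl (i : Fin (m+1)) :
    borderedMatrix m A' b t i.castSucc (Fin.last (m+1)) = b i := by
  simp [borderedMatrix]

@[simp] lemma bM_lc (j : Fin (m+1)) :
    borderedMatrix m A' b t (Fin.last (m+1)) j.castSucc = star (b j) := by
  simp [borderedMatrix]

@[simp] lemma bM_ll : borderedMatrix m A' b t (Fin.last (m+1)) (Fin.last (m+1)) = (t : ℂ) := by
  simp [borderedMatrix]

lemma traceB : (borderedMatrix m A' b t).trace = A'.trace + (t : ℂ) := by
  simp [Matrix.trace, Matrix.diag, Fin.sum_univ_castSucc]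

lemma traceBB :
    ((borderedMatrix m A' b t) * (borderedMatrix m A' b t)).trace
      = (A' * A').trace + 2 * ((∑ i, Complex.normSq (b i) : ℝ) : ℂ) + (t : ℂ) ^ 2 := by
  set B := borderedMatrix m A' b t with hB
  have key : ∀ (M : Matrix (Fin (m+2)) (Fin (m+2)) ℂ), (M * M).trace = ∑ i, ∑ j, M i j * M j i := by
    intro M; simp [Matrix.trace, Matrix.diag, Matrix.mul_apply]
  have key' : (A' * A').trace = ∑ i, ∑ j, A' i j * A' j i := by
    simp [Matrix.trace, Matrix.diag, Matrix.mul_apply]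
  rw [key, key']
  rw [Fin.sum_univ_castSucc]
  have inner1 : ∀ i' : Fin (m+1), ∑ j, B i'.castSucc j * B j i'.castSucc
      = (∑ j', A' i' j' * A' j' i') + (Complex.normSq (b i') : ℂ) := by
    intro i'
    rw [Fin.sum_univ_castSucc]
    simp [hB, Complex.mul_conj]
  have inner2 : ∑ j, B (Fin.last (m+1)) j * B j (Fin.last (m+1))
      = (∑ j', (Complex.normSq (b j') : ℂ)) + (t : ℂ) ^ 2 := by
    rw [Fin.sum_univ_castSucc]
    simp only [hB, bM_lc, bM_cl, bM_ll, sq]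
    congr 1
    refine Finset.sum_congr rfl fun j _ => ?_
    rw [show star (b j) = (starRingEnd ℂ) (b j) from rfl, mul_comm, Complex.mul_conj]
  simp only [inner1, inner2, Finset.sum_add_distrib]
  push_cast
  ring

/-- embedding of `ℂ^{m+1}` into `ℂ^{m+2}` -/
def emb (m : ℕ) : (Fin (m+1) → ℂ) →ₗ[ℂ] (Fin (m+2) → ℂ) where
  toFun x := Fin.snoc x 0
  map_add' x y := by
    funext i
    refine Fin.lastCases ?_ (fun i' => ?_) i <;> simp
  map_smul' c x := by
    funext i
    refine Fin.lastCases ?_ (fun i' => ?_) i <;> simp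

lemma emb_inj : Function.Injective (emb m) := by
  intro x y h
  funext i
  have := congrFun h i.castSucc
  simpa [emb] using this

lemma quad_emb (x' : Fin (m+1) → ℂ) :
    star ((emb m) x') ⬝ᵥ (borderedMatrix m A' b t) *ᵥ ((emb m) x') = star x' ⬝ᵥ A' *ᵥ x' := by
  show star (Fin.snoc x' 0 : Fin (m+2) → ℂ) ⬝ᵥ _ *ᵥ (Fin.snoc x' 0) = _
  simp only [dotProduct, Matrix.mulVec]
  rw [Fin.sum_univ_castSucc]
  simp only [Fin.snoc_last, Pi.star_apply, star_zero, zero_mul, add_zero]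
  refine Finset.sum_congr rfl fun i' _ => ?_
  congr 1
  · simp
  · rw [Fin.sum_univ_castSucc]
    simp

lemma norm_emb (x' : Fin (m+1) → ℂ) :
    star ((emb m) x') ⬝ᵥ ((emb m) x') = star x' ⬝ᵥ x' := by
  show star (Fin.snoc x' 0 : Fin (m+2) → ℂ) ⬝ᵥ (Fin.snoc x' 0) = _
  simp only [dotProduct]
  rw [Fin.sum_univ_castSucc]
  simp [Fin.snoc_castSucc, Fin.snoc_last]

lemma quad_single_last :
    star (Pi.single (Fin.last (m+1)) (1:ℂ)) ⬝ᵥ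
      (borderedMatrix m A' b t) *ᵥ Pi.single (Fin.last (m+1)) 1 = (t : ℂ) := by
  rw [Matrix.mulVec_single]
  simp [dotProduct, Pi.single_apply, ite_mul, apply_ite]

lemma norm_single_last :
    star (Pi.single (Fin.last (m+1)) (1:ℂ)) ⬝ᵥ Pi.single (Fin.last (m+1)) (1:ℂ) = 1 := by
  simp [dotProduct, Pi.single_apply, ite_mul, apply_ite]


end bordered

end BEA

open BEA in
/-- Asymptotics of the eigenvalues of a bordered Hermitian matrix as the bottom-right
entry `t → +∞`: the `n-1` smallest eigenvalues converge to those of the principal block,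
the largest eigenvalue is at least `t`, and it is asymptotic to `t`. -/
theorem bordered_eigenvalue_asymptotics (m : ℕ)
    (A' : Matrix (Fin (m+1)) (Fin (m+1)) ℂ) (hA' : A'.IsHermitian)
    (b : Fin (m+1) → ℂ)
    (hAt : ∀ t : ℝ, (borderedMatrix m A' b t).IsHermitian) :
    (∀ j : Fin (m+1),
        Filter.Tendsto (fun t : ℝ => sortedEigs (hAt t) j.castSucc) Filter.atTop
          (nhds (sortedEigs hA' j))) ∧
      (∀ t : ℝ, t ≤ sortedEigs (hAt t) (Fin.last (m+1))) ∧
      Filter.Tendsto (fun t : ℝ => sortedEigs (hAt t) (Fin.last (m+1)) / t)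
        Filter.atTop (nhds 1) := by
  classical
  set μ : Fin (m+1) → ℝ := sortedEigs hA' with hμ
  set s : ℝ → Fin (m+1) → ℝ := fun t j => sortedEigs (hAt t) j.castSucc with hs
  set L : ℝ → ℝ := fun t => sortedEigs (hAt t) (Fin.last (m+1)) with hL
  set T : ℝ := ∑ j, μ j with hT
  set Q : ℝ := ∑ j, (μ j) ^ 2 with hQ
  set β : ℝ := ∑ i, Complex.normSq (b i) with hβ
  set C : ℝ := Q + 2 * β with hC
  have hQ0 : 0 ≤ Q := Finset.sum_nonneg fun j _ => sq_nonneg _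
  have hβ0 : 0 ≤ β := Finset.sum_nonneg fun i _ => Complex.normSq_nonneg _
  have hC0 : 0 ≤ C := by rw [hC]; linarith
  -- fact1 : interlacing-type upper bound
  have fact1 : ∀ t j, s t j ≤ μ j := by
    intro t j
    obtain ⟨V, hVrank, hVbound⟩ := exists_low_subspace hA' j
    have hfr : Module.finrank ℂ ↥(V.map (emb m)) = (j : ℕ) + 1 := by
      rw [← LinearEquiv.finrank_eq (Submodule.equivMapOfInjective (emb m) emb_inj V), hVrank]
    refine sorted_le_of_subspace (hAt t) j.castSucc (μ j) (V.map (emb m)) ?_ ?_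
    · rw [hfr, Fin.coe_castSucc]
    · rintro x ⟨x', hx', rfl⟩
      rw [show ((emb m) x' : Fin (m+2) → ℂ) = (emb m) x' from rfl]
      rw [quad_emb, norm_emb]
      exact hVbound x' hx'
  -- fact2 : t ≤ L t
  have fact2 : ∀ t, t ≤ L t := by
    intro t
    have h := rayleigh_le_max (hAt t) (Pi.single (Fin.last (m+1)) 1)
    rw [quad_single_last, norm_single_last] at h
    simpa using h
  -- fact3 : trace identity
  have fact3 : ∀ t, (∑ j, s t j) + L t = T + t := by
    intro t
    have h := sum_sorted (hAt t)
    rw [Fin.sum_univ_castSucc, traceB, Complex.add_re, Complex.ofReal_re] at h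
    have hT' : T = A'.trace.re := sum_sorted hA'
    rw [h, hT']
  -- fact4 : Frobenius identity
  have fact4 : ∀ t, (∑ j, (s t j) ^ 2) + (L t) ^ 2 = C + t ^ 2 := by
    intro t
    have h := sum_sorted_sq (hAt t)
    rw [Fin.sum_univ_castSucc, traceBB, Complex.add_re, Complex.add_re] at h
    rw [show (2 : ℂ) * ((β : ℝ) : ℂ) = ((2 * β : ℝ) : ℂ) by push_cast; ring,
      Complex.ofReal_re, ← Complex.ofReal_pow, Complex.ofReal_re] at h
    have hQ' : Q = (A' * A').trace.re := sum_sorted_sq hA'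
    rw [h, hC, hQ']
  -- fact5 : upper bound on largest eigenvalue
  have fact5 : ∀ t : ℝ, 0 < t → L t ≤ t + C / (2 * t) := by
    intro t ht
    have ht' : t ≠ 0 := ne_of_gt ht
    have hsq : (L t) ^ 2 ≤ t ^ 2 + C := by
      have hnn : 0 ≤ ∑ j, (s t j) ^ 2 := Finset.sum_nonneg fun j _ => sq_nonneg _
      have := fact4 t
      linarith
    by_contra hcon
    push_neg at hcon
    have hrhs : 0 ≤ t + C / (2 * t) := by positivity
    have hlt : (t + C / (2 * t)) ^ 2 < (L t) ^ 2 := by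
      exact pow_lt_pow_left₀ hcon hrhs two_ne_zero
    have hexp : (t + C / (2 * t)) ^ 2 = t ^ 2 + C + (C / (2 * t)) ^ 2 := by
      field_simp
      ring
    nlinarith [sq_nonneg (C / (2 * t))]
  -- fact7 : lower bound on small eigenvalues
  have fact7 : ∀ t : ℝ, 0 < t → ∀ j, μ j - C / (2 * t) ≤ s t j := by
    intro t ht j
    have h1 : μ j - s t j ≤ ∑ k, (μ k - s t k) :=
      Finset.single_le_sum (f := fun k => μ k - s t k)
        (fun k _ => sub_nonneg.2 (fact1 t k)) (Finset.mem_univ j)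
    have h2 : ∑ k, (μ k - s t k) = T - ∑ k, s t k := by
      rw [Finset.sum_sub_distrib, hT]
    have h3 : T - C / (2 * t) ≤ ∑ k, s t k := by
      have := fact5 t ht
      have := fact3 t
      linarith
    linarith
  -- limit of C/(2t)
  have hhalf : Filter.Tendsto (fun t : ℝ => C / (2 * t)) Filter.atTop (nhds 0) :=
    Filter.Tendsto.div_atTop tendsto_const_nhds
      (Filter.Tendsto.const_mul_atTop two_pos Filter.tendsto_id)
  refine ⟨?_, fact2, ?_⟩
  · intro j
    have hlow : Filter.Tendsto (fun t : ℝ => μ j - C / (2 * t)) Filter.atTop (nhds (μ j)) := by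
      have := Filter.Tendsto.sub (tendsto_const_nhds (x := μ j)
        (f := Filter.atTop (α := ℝ))) hhalf
      simpa using this
    refine tendsto_of_tendsto_of_tendsto_of_le_of_le' hlow tendsto_const_nhds ?_ ?_
    · filter_upwards [Filter.eventually_gt_atTop 0] with t ht
      exact fact7 t ht j
    · filter_upwards with t
      exact fact1 t j
  · have hupper : Filter.Tendsto (fun t : ℝ => 1 + C / (2 * t ^ 2)) Filter.atTop (nhds 1) := by
      have h2 : Filter.Tendsto (fun t : ℝ => C / (2 * t ^ 2)) Filter.atTop (nhds 0) :=
        Filter.Tendsto.div_atTop tendsto_const_nhds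
          (Filter.Tendsto.const_mul_atTop two_pos (Filter.tendsto_pow_atTop two_ne_zero))
      have := Filter.Tendsto.add (tendsto_const_nhds
        (x := (1:ℝ)) (f := Filter.atTop (α := ℝ))) h2
      simpa using this
    refine tendsto_of_tendsto_of_tendsto_of_le_of_le' tendsto_const_nhds hupper ?_ ?_
    · filter_upwards [Filter.eventually_gt_atTop 0] with t ht
      exact (one_le_div ht).2 (fact2 t)
    · filter_upwards [Filter.eventually_gt_atTop 0] with t ht
      have ht' : t ≠ 0 := ne_of_gt ht
      have h1 : L t / t ≤ (t + C / (2 * t)) / t := by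
        exact div_le_div_of_nonneg_right (fact5 t ht) ht.le
      have h2 : (t + C / (2 * t)) / t = 1 + C / (2 * t ^ 2) := by
        field_simp
      rw [h2] at h1
      exact h1
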